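/- A type (C) ILP min {cᵀx : Ax ≤ b, x ≥ 0} with fixed real matrix A, b ∈ [b̲,b̄], c ∈ [c̲,c̄] has strongly zero duality gap if and only if at least one of the real systems Ax ≤ b̲, x ≥ 0, or Aᵀy ≤ c̲, y ≤ 0, is feasible. -/

import Mathlib

open Matrix


section ConeClosed

variable {E : Type*} [NormedAddCommGroup E] [NormedSpace ℝ E] [FiniteDimensional ℝ E]
variable {ι : Type*} [Fintype ι] [DecidableEq ι]

/-- The cone generated (with nonneg coefficients) by `v i`, `i ∈ s`. -/
def coneSet (v : ι → E) (s : Finset ι) : Set E :=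
  {x | ∃ u : ι → ℝ, (∀ i, 0 ≤ u i) ∧ x = ∑ i ∈ s, u i • v i}

/-- The linear map sending coefficients to the combination. -/
noncomputable def sumSmulMap (w : ι → E) : (ι → ℝ) →ₗ[ℝ] E where
  toFun u := ∑ i, u i • w i
  map_add' a b := by simp [add_smul, Finset.sum_add_distrib]
  map_smul' r a := by simp [smul_smul, Finset.smul_sum]

lemma isClosed_coneSet_of_li (v : ι → E) (s : Finset ι)
    (h : LinearIndependent ℝ (fun i : s => v i)) : IsClosed (coneSet v s) := by
  classical
  set φ := sumSmulMap (fun i : s => v i) with hφ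
  have hinj : LinearMap.ker φ = ⊥ := by
    rw [LinearMap.ker_eq_bot']
    intro g hg
    have := (Fintype.linearIndependent_iff.mp h) g hg
    funext i; exact this i
  have hce := φ.isClosedEmbedding_of_injective hinj
  have himg : coneSet v s = φ '' {u : s → ℝ | ∀ i, 0 ≤ u i} := by
    ext x
    constructor
    · rintro ⟨u, hu, rfl⟩
      refine ⟨fun i => u i, fun i => hu i, ?_⟩
      simp only [hφ, sumSmulMap, LinearMap.coe_mk, AddHom.coe_mk]
      rw [← Finset.sum_attach s (fun i => u i • v i)]
      rfl
    · rintro ⟨u, hu, rfl⟩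
      refine ⟨fun i => if hi : i ∈ s then u ⟨i, hi⟩ else 0, ?_, ?_⟩
      · intro i; by_cases hi : i ∈ s <;> simp [hi, hu _]
      · simp only [hφ, sumSmulMap, LinearMap.coe_mk, AddHom.coe_mk]
        rw [← Finset.sum_attach s (fun i => (if hi : i ∈ s then u ⟨i, hi⟩ else 0) • v i)]
        apply Finset.sum_congr rfl
        intro i _
        simp [i.2]
  rw [himg]
  apply hce.isClosedMap
  have : {u : s → ℝ | ∀ i, 0 ≤ u i} = Set.Ici (0 : s → ℝ) := by
    ext u; simp [Set.mem_Ici, Pi.le_def]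
  rw [this]; exact isClosed_Ici

lemma isClosed_coneSet (v : ι → E) (s : Finset ι) : IsClosed (coneSet v s) := by
  classical
  induction s using Finset.strongInduction with
  | _ s ih =>
    by_cases h : LinearIndependent ℝ (fun i : s => v i)
    · exact isClosed_coneSet_of_li v s h
    · obtain ⟨g, hg0, i0, hi0⟩ := Fintype.not_linearIndependent_iff.mp h
      set G : ι → ℝ := fun i => if hi : i ∈ s then g ⟨i, hi⟩ else 0 with hG
      have hGsum : ∀ g' : s → ℝ, ∑ i ∈ s, (fun i => if hi : i ∈ s then g' ⟨i, hi⟩ else 0) i • v i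
          = ∑ i : s, g' i • v i := by
        intro g'
        rw [← Finset.sum_attach s (fun i => (if hi : i ∈ s then g' ⟨i, hi⟩ else 0) • v i)]
        apply Finset.sum_congr rfl
        intro i _; simp [i.2]
      have hGsum0 : ∑ i ∈ s, G i • v i = 0 := by rw [hG]; rw [hGsum g]; exact hg0
      have key : coneSet v s = ⋃ j ∈ s.filter (fun j => G j ≠ 0), coneSet v (s.erase j) := by
        ext x
        simp only [Set.mem_iUnion, exists_prop, Finset.mem_filter]
        constructor
        · rintro ⟨u, hu, rfl⟩
          -- pick sign so that some coefficient is positive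
          obtain ⟨g', hg'sum, hg'G, j1, hj1s, hj1pos⟩ :
              ∃ g' : ι → ℝ, (∑ i ∈ s, g' i • v i = 0) ∧ (∀ i, g' i ≠ 0 ↔ G i ≠ 0) ∧
                ∃ j ∈ s, 0 < g' j := by
            by_cases hpos : ∃ j ∈ s, 0 < G j
            · obtain ⟨j, hj, hjpos⟩ := hpos
              exact ⟨G, hGsum0, fun i => Iff.rfl, j, hj, hjpos⟩
            · push_neg at hpos
              refine ⟨-G, by simp only [Pi.neg_apply, neg_smul, Finset.sum_neg_distrib, hGsum0, neg_zero], by intro i; simp, i0, i0.2, ?_⟩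
              have h1 : G i0 ≠ 0 := by simp [hG, i0.2, hi0, Subtype.coe_eta]
              have h2 := hpos i0 i0.2
              simp only [Pi.neg_apply]
              cases' lt_or_eq_of_le h2 with h3 h3
              · linarith
              · exact absurd h3 h1
          set P := s.filter (fun i => 0 < g' i) with hP
          have hPne : P.Nonempty := ⟨j1, Finset.mem_filter.mpr ⟨hj1s, hj1pos⟩⟩
          obtain ⟨j, hjP, hjmin⟩ := Finset.exists_min_image P (fun i => u i / g' i) hPne
          have hjs : j ∈ s := (Finset.mem_filter.mp hjP).1
          have hgj : 0 < g' j := (Finset.mem_filter.mp hjP).2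
          set t := u j / g' j with ht
          have ht0 : 0 ≤ t := div_nonneg (hu j) hgj.le
          have hnn : ∀ i ∈ s, 0 ≤ u i - t * g' i := by
            intro i hi
            by_cases hgi : 0 < g' i
            · have := hjmin i (Finset.mem_filter.mpr ⟨hi, hgi⟩)
              rw [ht] at *
              have : t * g' i ≤ (u i / g' i) * g' i := by
                apply mul_le_mul_of_nonneg_right _ hgi.le
                exact hjmin i (Finset.mem_filter.mpr ⟨hi, hgi⟩)
              rw [div_mul_cancel₀ _ (ne_of_gt hgi)] at this
              linarith
            · push_neg at hgi
              have : t * g' i ≤ 0 := mul_nonpos_of_nonneg_of_nonpos ht0 hgi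
              have := hu i
              linarith
          have hjzero : u j - t * g' j = 0 := by
            rw [ht, div_mul_cancel₀ _ (ne_of_gt hgj)]; ring
          refine ⟨j, ⟨hjs, (hg'G j).mp (ne_of_gt hgj)⟩,
            fun i => if i ∈ s.erase j then u i - t * g' i else 0, ?_, ?_⟩
          · intro i
            by_cases hi : i ∈ s.erase j
            · simp only [hi, if_true]; exact hnn i (Finset.mem_of_mem_erase hi)
            · simp [hi]
          · have : ∑ i ∈ s.erase j, (if i ∈ s.erase j then u i - t * g' i else 0) • v i
                = ∑ i ∈ s.erase j, (u i - t * g' i) • v i :=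
              Finset.sum_congr rfl (fun i hi => by simp [hi])
            rw [this]
            have h2 : ∑ i ∈ s.erase j, (u i - t * g' i) • v i
                = ∑ i ∈ s, (u i - t * g' i) • v i := by
              rw [← Finset.sum_erase_add s _ hjs, hjzero]
              simp
            rw [h2]
            have h3 : ∑ x ∈ s, (t * g' x) • v x = t • ∑ x ∈ s, g' x • v x := by
              rw [Finset.smul_sum]
              exact Finset.sum_congr rfl (fun i _ => (smul_smul t (g' i) (v i)).symm)
            simp only [sub_smul]
            rw [Finset.sum_sub_distrib, h3, hg'sum, smul_zero, sub_zero]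
        · rintro ⟨j, hj, u, hu, rfl⟩
          refine ⟨Function.update u j 0, ?_, ?_⟩
          · intro i
            by_cases hij : i = j
            · subst hij; simp
            · simp [Function.update_of_ne hij, hu i]
          · rw [← Finset.sum_erase_add s _ hj.1]
            simp only [Function.update_self, zero_smul, add_zero]
            apply Finset.sum_congr rfl
            intro i hi
            rw [Function.update_of_ne (Finset.ne_of_mem_erase hi)]
      rw [key]
      apply Set.Finite.isClosed_biUnion (Finset.finite_toSet _)
      intro j hj
      simp only [Finset.coe_filter, Set.mem_setOf_eq] at hj
      exact ih (s.erase j) (Finset.erase_ssubset hj.1)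

end ConeClosed

open scoped InnerProductSpace in
lemma farkas {k l : Type*} [Fintype k] [Fintype l] [DecidableEq k] [DecidableEq l]
    (M : Matrix k l ℝ) (q : k → ℝ) (h : ¬ ∃ u : l → ℝ, 0 ≤ u ∧ M *ᵥ u = q) :
    ∃ w : k → ℝ, 0 ≤ Mᵀ *ᵥ w ∧ q ⬝ᵥ w < 0 := by
  classical
  set v : l → EuclideanSpace ℝ k := fun j => WithLp.toLp 2 (fun i => M i j) with hv
  have hmv : ∀ u : l → ℝ, WithLp.toLp 2 (M *ᵥ u : k → ℝ) = ∑ j : l, u j • v j := by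
    intro u
    ext i
    simp only [Matrix.mulVec, dotProduct, hv]
    simp [Finset.sum_apply, mul_comm]
  set C : ConvexCone ℝ (EuclideanSpace ℝ k) :=
    { carrier := {x | ∃ u : l → ℝ, (∀ j, 0 ≤ u j) ∧ WithLp.toLp 2 (M *ᵥ u : k → ℝ) = x}
      smul_mem' := by
        rintro c hc x ⟨u, hu, rfl⟩
        refine ⟨c • u, fun j => mul_nonneg hc.le (hu j), ?_⟩
        simp [Matrix.mulVec_smul]
      add_mem' := by
        rintro x ⟨u, hu, rfl⟩ y ⟨u', hu', rfl⟩
        refine ⟨u + u', fun j => add_nonneg (hu j) (hu' j), ?_⟩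
        simp [Matrix.mulVec_add] } with hC
  have hCcone : (C : Set (EuclideanSpace ℝ k)) = coneSet v Finset.univ := by
    ext x
    constructor
    · rintro ⟨u, hu, rfl⟩
      exact ⟨u, hu, hmv u⟩
    · rintro ⟨u, hu, rfl⟩
      exact ⟨u, hu, hmv u⟩
  have hne : (C : Set (EuclideanSpace ℝ k)).Nonempty :=
    ⟨0, ⟨0, fun j => le_refl 0, by simp⟩⟩
  have hcl : IsClosed (C : Set (EuclideanSpace ℝ k)) := by
    rw [hCcone]; exact isClosed_coneSet v Finset.univ
  have hq : (WithLp.toLp 2 q : EuclideanSpace ℝ k) ∉ C := by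
    intro ⟨u, hu, hequ⟩
    exact h ⟨u, fun j => hu j, WithLp.toLp_injective 2 hequ⟩
  obtain ⟨y, hy1, hy2⟩ :=
    ProperCone.hyperplane_separation' (E := EuclideanSpace ℝ k)
      { carrier := (C : Set (EuclideanSpace ℝ k))
        add_mem' := fun ha hb => C.add_mem ha hb
        zero_mem' := ⟨0, fun j => le_refl 0, by simp⟩
        smul_mem' := fun c x hx => by
          rcases eq_or_lt_of_le c.2 with h0 | hpos
          · have : c = 0 := NNReal.eq h0.symm
            subst this; exact ⟨0, fun j => le_refl 0, by simp⟩
          · exact C.smul_mem (c := (c : ℝ)) hpos hx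
        isClosed' := hcl } hq
  have hinner : ∀ a b : EuclideanSpace ℝ k, ⟪a, b⟫_ℝ = ∑ i, a i * b i := by
    intro a b
    simp [PiLp.inner_apply, RCLike.inner_apply, conj_trivial, mul_comm]
  refine ⟨y.ofLp, ?_, ?_⟩
  · intro j
    have hmem : (v j : EuclideanSpace ℝ k) ∈ C := by
      refine ⟨Pi.single j 1, fun j' => ?_, ?_⟩
      · by_cases hjj : j' = j <;> simp [hjj, Pi.single_apply]
      · ext i
        simp [Matrix.mulVec, dotProduct, Pi.single_apply, mul_ite,
          Finset.sum_ite_eq', hv]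
    have := hy1 _ hmem
    rw [hinner] at this
    simpa [Matrix.mulVec, dotProduct, hv] using this
  · rw [hinner] at hy2
    calc q ⬝ᵥ y = ∑ i, y i * q i := by
          simp [dotProduct, mul_comm]
      _ < 0 := by simpa [mul_comm] using hy2

lemma farkas_ineq {k l : Type*} [Fintype k] [Fintype l] [DecidableEq k] [DecidableEq l]
    (M : Matrix k l ℝ) (q : k → ℝ) (h : ¬ ∃ u : l → ℝ, 0 ≤ u ∧ M *ᵥ u ≤ q) :
    ∃ w : k → ℝ, 0 ≤ w ∧ 0 ≤ Mᵀ *ᵥ w ∧ q ⬝ᵥ w < 0 := by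
  classical
  set N : Matrix k (l ⊕ k) ℝ := Matrix.of fun i jc =>
    Sum.elim (fun j => M i j) (fun i' => if i' = i then (1 : ℝ) else 0) jc with hN
  have hNmul : ∀ z : l ⊕ k → ℝ, N *ᵥ z = (M *ᵥ (z ∘ Sum.inl)) + (z ∘ Sum.inr) := by
    intro z
    funext i
    simp [hN, Matrix.mulVec, dotProduct, Fintype.sum_sum_type, ite_mul,
      Finset.sum_ite_eq', Function.comp]
  have h' : ¬ ∃ z : l ⊕ k → ℝ, 0 ≤ z ∧ N *ᵥ z = q := by
    rintro ⟨z, hz, hzeq⟩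
    apply h
    refine ⟨z ∘ Sum.inl, fun j => hz (Sum.inl j), ?_⟩
    intro i
    have := congrFun hzeq i
    rw [hNmul] at this
    simp only [Pi.add_apply, Function.comp_apply] at this
    have h2 := hz (Sum.inr i)
    simp only [Pi.zero_apply] at h2
    linarith [le_of_eq this]
  obtain ⟨w, hw1, hw2⟩ := farkas N q h'
  refine ⟨w, ?_, ?_, hw2⟩
  · intro i
    have := hw1 (Sum.inr i)
    simpa [hN, Matrix.mulVec, dotProduct, Matrix.transpose_apply,
      Finset.sum_ite_eq] using this
  · intro j
    have := hw1 (Sum.inl j)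
    simpa [hN, Matrix.mulVec, dotProduct, Matrix.transpose_apply] using this

section DotHelpers

variable {κ : Type*} [Fintype κ]

lemma dot_mono_left {a b x : κ → ℝ} (hab : a ≤ b) (hx : 0 ≤ x) : a ⬝ᵥ x ≤ b ⬝ᵥ x :=
  Finset.sum_le_sum fun i _ => mul_le_mul_of_nonneg_right (hab i) (hx i)

lemma dot_anti_left {a b y : κ → ℝ} (hab : a ≤ b) (hy : y ≤ 0) : b ⬝ᵥ y ≤ a ⬝ᵥ y :=
  Finset.sum_le_sum fun i _ => mul_le_mul_of_nonpos_right (hab i) (hy i)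

lemma dot_nonneg_nonpos {a y : κ → ℝ} (ha : a ≤ 0) (hy : y ≤ 0) : 0 ≤ a ⬝ᵥ y :=
  Finset.sum_nonneg fun i _ => by
    have h1 : a i ≤ 0 := ha i
    have h2 : y i ≤ 0 := hy i
    nlinarith

lemma dot_nonneg {a x : κ → ℝ} (ha : 0 ≤ a) (hx : 0 ≤ x) : 0 ≤ a ⬝ᵥ x :=
  Finset.sum_nonneg fun i _ => mul_nonneg (ha i) (hx i)

end DotHelpers

lemma transfer_dot {m n : ℕ} (A : Matrix (Fin m) (Fin n) ℝ) (x : Fin n → ℝ) (y : Fin m → ℝ) :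
    x ⬝ᵥ (Aᵀ *ᵥ y) = (A *ᵥ x) ⬝ᵥ y := by
  rw [dotProduct_mulVec, Matrix.vecMul_transpose]

/-- Weak LP duality for the type-(C) pair. -/
lemma weak_dualC {m n : ℕ} (A : Matrix (Fin m) (Fin n) ℝ) {b : Fin m → ℝ} {c : Fin n → ℝ}
    {x : Fin n → ℝ} {y : Fin m → ℝ} (hx : A *ᵥ x ≤ b) (hx0 : 0 ≤ x)
    (hy : Aᵀ *ᵥ y ≤ c) (hy0 : y ≤ 0) : b ⬝ᵥ y ≤ c ⬝ᵥ x := by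
  have h1 : b ⬝ᵥ y ≤ (A *ᵥ x) ⬝ᵥ y := dot_anti_left hx hy0
  have h2 : x ⬝ᵥ (Aᵀ *ᵥ y) ≤ x ⬝ᵥ c := by
    rw [show x ⬝ᵥ (Aᵀ *ᵥ y) = (Aᵀ *ᵥ y) ⬝ᵥ x from dotProduct_comm _ _,
        show x ⬝ᵥ c = c ⬝ᵥ x from dotProduct_comm _ _]
    exact dot_mono_left hy hx0
  calc b ⬝ᵥ y ≤ (A *ᵥ x) ⬝ᵥ y := h1
    _ = x ⬝ᵥ (Aᵀ *ᵥ y) := (transfer_dot A x y).symm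
    _ ≤ x ⬝ᵥ c := h2
    _ = c ⬝ᵥ x := dotProduct_comm _ _

/-- Strong duality existence: if both systems are feasible, there are feasible `x`, `y`
with `c⬝x ≤ b⬝y`. -/
lemma strong_dualC {m n : ℕ} (A : Matrix (Fin m) (Fin n) ℝ) (b : Fin m → ℝ) (c : Fin n → ℝ)
    {x0 : Fin n → ℝ} (hx0 : A *ᵥ x0 ≤ b) (hx00 : 0 ≤ x0)
    {y0 : Fin m → ℝ} (hy0 : Aᵀ *ᵥ y0 ≤ c) (hy00 : y0 ≤ 0) :
    ∃ x y, (A *ᵥ x ≤ b ∧ 0 ≤ x) ∧ (Aᵀ *ᵥ y ≤ c ∧ y ≤ 0) ∧ c ⬝ᵥ x ≤ b ⬝ᵥ y := by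
  classical
  set Mbig : Matrix ((Fin m ⊕ Fin n) ⊕ Fin 1) (Fin n ⊕ Fin m) ℝ := Matrix.of fun r z =>
    match r, z with
    | .inl (.inl i), .inl j => A i j
    | .inl (.inl _), .inr _ => 0
    | .inl (.inr _), .inl _ => 0
    | .inl (.inr j), .inr i => -A i j
    | .inr _, .inl j => c j
    | .inr _, .inr i => b i
    with hM
  set qbig : (Fin m ⊕ Fin n) ⊕ Fin 1 → ℝ := fun r =>
    match r with
    | .inl (.inl i) => b i
    | .inl (.inr j) => c j
    | .inr _ => 0
    with hq
  by_cases hfeas : ∃ z : Fin n ⊕ Fin m → ℝ, 0 ≤ z ∧ Mbig *ᵥ z ≤ qbig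
  · obtain ⟨z, hz0, hz⟩ := hfeas
    refine ⟨z ∘ Sum.inl, -(z ∘ Sum.inr), ⟨?_, fun j => hz0 (Sum.inl j)⟩,
      ⟨?_, fun i => neg_nonpos.mpr (hz0 (Sum.inr i))⟩, ?_⟩
    · intro i
      have := hz (Sum.inl (Sum.inl i))
      simpa [hM, hq, Matrix.mulVec, dotProduct, Fintype.sum_sum_type,
        Function.comp] using this
    · intro j
      have h' : -(∑ x, A x j * z (Sum.inr x)) ≤ c j := by
        have := hz (Sum.inl (Sum.inr j))
        simpa [hM, hq, Matrix.mulVec, dotProduct, Fintype.sum_sum_type,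
          neg_mul, Finset.sum_neg_distrib] using this
      have h'' : (Aᵀ *ᵥ (-(z ∘ Sum.inr))) j = -(∑ x, A x j * z (Sum.inr x)) := by
        simp [Matrix.mulVec, dotProduct, mul_neg, Finset.sum_neg_distrib,
          Function.comp]
      rw [h'']; exact h'
    · have h' : (∑ x, c x * z (Sum.inl x)) + (∑ x, b x * z (Sum.inr x)) ≤ 0 := by
        have := hz (Sum.inr 0)
        simpa [hM, hq, Matrix.mulVec, dotProduct, Fintype.sum_sum_type] using this
      have e1 : c ⬝ᵥ (z ∘ Sum.inl) = ∑ x, c x * z (Sum.inl x) := rfl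
      have e2 : b ⬝ᵥ (-(z ∘ Sum.inr)) = -(∑ x, b x * z (Sum.inr x)) := by
        simp [dotProduct, mul_neg, Finset.sum_neg_distrib, Function.comp]
      rw [e1, e2]; linarith
  · obtain ⟨w, hw0, hwT, hwq⟩ := farkas_ineq Mbig qbig hfeas
    exfalso
    set u : Fin m → ℝ := fun i => w (Sum.inl (Sum.inl i)) with hu
    set vv : Fin n → ℝ := fun j => w (Sum.inl (Sum.inr j)) with hvv
    set lam : ℝ := w (Sum.inr 0) with hlam
    have hu0 : 0 ≤ u := fun i => hw0 _
    have hvv0 : 0 ≤ vv := fun j => hw0 _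
    have hlam0 : 0 ≤ lam := hw0 _
    have hT1 : ∀ j, 0 ≤ (Aᵀ *ᵥ u) j + c j * lam := by
      intro j
      have := hwT (Sum.inl j)
      simpa [hM, Matrix.mulVec, dotProduct, Fintype.sum_sum_type,
        Matrix.transpose_apply] using this
    have hT2 : ∀ i, (A *ᵥ vv) i ≤ b i * lam := by
      intro i
      have h' : 0 ≤ -((A *ᵥ vv) i) + b i * lam := by
        have := hwT (Sum.inr i)
        simpa [hM, Matrix.mulVec, dotProduct, Fintype.sum_sum_type,
          Matrix.transpose_apply, neg_mul, Finset.sum_neg_distrib] using this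
      linarith
    have hq2 : b ⬝ᵥ u + c ⬝ᵥ vv < 0 := by
      have := hwq
      simpa [hq, dotProduct, Fintype.sum_sum_type] using this
    rcases eq_or_lt_of_le hlam0 with hl0 | hlpos
    · -- lam = 0 case
      have hAu : 0 ≤ Aᵀ *ᵥ u := by
        intro j; have := hT1 j; rw [← hl0] at this; simpa using this
      have hAv : A *ᵥ vv ≤ 0 := by
        intro i; have := hT2 i; rw [← hl0] at this; simpa using this
      have h1 : 0 ≤ b ⬝ᵥ u := by
        have g1 : (A *ᵥ x0) ⬝ᵥ u ≤ b ⬝ᵥ u := dot_mono_left hx0 hu0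
        have g2 : 0 ≤ x0 ⬝ᵥ (Aᵀ *ᵥ u) := dot_nonneg hx00 hAu
        rw [transfer_dot] at g2
        linarith
      have h2 : 0 ≤ c ⬝ᵥ vv := by
        have g1 : (Aᵀ *ᵥ y0) ⬝ᵥ vv ≤ c ⬝ᵥ vv := dot_mono_left hy0 hvv0
        have g2 : 0 ≤ (A *ᵥ vv) ⬝ᵥ y0 := dot_nonneg_nonpos hAv hy00
        have g3 : vv ⬝ᵥ (Aᵀ *ᵥ y0) = (A *ᵥ vv) ⬝ᵥ y0 := transfer_dot A vv y0
        rw [dotProduct_comm] at g3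
        linarith [g3 ▸ g2]
      linarith
    · -- lam > 0 case
      set xh : Fin n → ℝ := lam⁻¹ • vv with hxh
      set yh : Fin m → ℝ := -(lam⁻¹ • u) with hyh
      have hxhfeas : A *ᵥ xh ≤ b := by
        intro i
        rw [hxh, Matrix.mulVec_smul]
        have h3 := hT2 i
        have hla : lam⁻¹ * ((A *ᵥ vv) i) ≤ lam⁻¹ * (b i * lam) :=
          mul_le_mul_of_nonneg_left h3 (inv_nonneg.mpr hlam0)
        have h4 : lam⁻¹ * (b i * lam) = b i := by
          field_simp
        simp only [Pi.smul_apply, smul_eq_mul]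
        linarith
      have hyhfeas : Aᵀ *ᵥ yh ≤ c := by
        intro j
        rw [hyh]
        have hneg : Aᵀ *ᵥ (-(lam⁻¹ • u)) = -(lam⁻¹ • (Aᵀ *ᵥ u)) := by
          rw [Matrix.mulVec_neg, Matrix.mulVec_smul]
        rw [hneg]
        have h3 := hT1 j
        have hla : 0 ≤ lam⁻¹ * ((Aᵀ *ᵥ u) j + c j * lam) :=
          mul_nonneg (inv_nonneg.mpr hlam0) h3
        have h4 : lam⁻¹ * (c j * lam) = c j := by field_simp
        simp only [Pi.neg_apply, Pi.smul_apply, smul_eq_mul]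
        nlinarith
      have hxh0 : 0 ≤ xh := fun j => by
        simpa [hxh] using mul_nonneg (inv_nonneg.mpr hlam0) (hvv0 j)
      have hyh0 : yh ≤ 0 := fun i => by
        have h5 : 0 ≤ lam⁻¹ * u i := mul_nonneg (inv_nonneg.mpr hlam0) (hu0 i)
        simpa [hyh] using neg_nonpos.mpr h5
      have hwd := weak_dualC A hxhfeas hxh0 hyhfeas hyh0
      rw [hxh, hyh] at hwd
      have e1 : c ⬝ᵥ (lam⁻¹ • vv) = lam⁻¹ * (c ⬝ᵥ vv) := dotProduct_smul _ _ _
      have e2 : b ⬝ᵥ (-(lam⁻¹ • u)) = -(lam⁻¹ * (b ⬝ᵥ u)) := by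
        rw [dotProduct_neg, dotProduct_smul]; rfl
      rw [e1, e2] at hwd
      have hinv : 0 < lam⁻¹ := inv_pos.mpr hlpos
      nlinarith

/-- Optimal value of the primal type-(C) LP `min cᵀx  s.t.  Ax ≤ b, x ≥ 0`. -/
noncomputable def primalValC {m n : ℕ} (A : Matrix (Fin m) (Fin n) ℝ) (b : Fin m → ℝ)
    (c : Fin n → ℝ) : EReal :=
  sInf ((fun x => ((c ⬝ᵥ x : ℝ) : EReal)) '' {x | A.mulVec x ≤ b ∧ 0 ≤ x})

/-- Optimal value of the dual type-(C) LP `max bᵀy  s.t.  Aᵀy ≤ c, y ≤ 0`. -/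
noncomputable def dualValC {m n : ℕ} (A : Matrix (Fin m) (Fin n) ℝ) (b : Fin m → ℝ)
    (c : Fin n → ℝ) : EReal :=
  sSup ((fun y => ((b ⬝ᵥ y : ℝ) : EReal)) '' {y | Aᵀ.mulVec y ≤ c ∧ y ≤ 0})

/-- Certificate of dual infeasibility: an unbounded primal direction. -/
lemma dual_infeas_cert {m n : ℕ} (A : Matrix (Fin m) (Fin n) ℝ) (c : Fin n → ℝ)
    (h : ¬ ∃ y : Fin m → ℝ, Aᵀ *ᵥ y ≤ c ∧ y ≤ 0) :
    ∃ d : Fin n → ℝ, 0 ≤ d ∧ A *ᵥ d ≤ 0 ∧ c ⬝ᵥ d < 0 := by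
  have h' : ¬ ∃ u : Fin m → ℝ, 0 ≤ u ∧ (-Aᵀ) *ᵥ u ≤ c := by
    rintro ⟨u, hu0, hu⟩
    refine h ⟨-u, ?_, fun i => neg_nonpos.mpr (hu0 i)⟩
    intro j
    have := hu j
    rwa [Matrix.neg_mulVec, ← Matrix.mulVec_neg] at this
  obtain ⟨w, hw0, hwT, hwc⟩ := farkas_ineq (-Aᵀ) c h'
  refine ⟨w, hw0, ?_, hwc⟩
  intro i
  have := hwT i
  rw [Matrix.transpose_neg, Matrix.transpose_transpose, Matrix.neg_mulVec] at this
  simpa using this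

/-- Certificate of primal infeasibility: an unbounded dual direction. -/
lemma primal_infeas_cert {m n : ℕ} (A : Matrix (Fin m) (Fin n) ℝ) (b : Fin m → ℝ)
    (h : ¬ ∃ x : Fin n → ℝ, A *ᵥ x ≤ b ∧ 0 ≤ x) :
    ∃ w : Fin m → ℝ, 0 ≤ w ∧ 0 ≤ Aᵀ *ᵥ w ∧ b ⬝ᵥ w < 0 := by
  apply farkas_ineq A b
  rintro ⟨u, hu0, hu⟩
  exact h ⟨u, hu, hu0⟩

/-- A type (C) ILP with fixed matrix has strongly zero duality gap iff
`Ax ≤ b̲, x ≥ 0` or `Aᵀy ≤ c̲, y ≤ 0` is feasible. -/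
theorem typeC_degenerate_strongly_zero_dg_iff {m n : ℕ}
    (A : Matrix (Fin m) (Fin n) ℝ) (bL bU : Fin m → ℝ) (cL cU : Fin n → ℝ)
    (hb : bL ≤ bU) (hc : cL ≤ cU) :
    (∀ b c, bL ≤ b → b ≤ bU → cL ≤ c → c ≤ cU →
        primalValC A b c = dualValC A b c) ↔
      ((∃ x : Fin n → ℝ, A.mulVec x ≤ bL ∧ 0 ≤ x) ∨
       (∃ y : Fin m → ℝ, Aᵀ.mulVec y ≤ cL ∧ y ≤ 0)) := by
  constructor
  · intro hdg
    by_contra hcon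
    push_neg at hcon
    obtain ⟨h1, h2⟩ := hcon
    have hP : {x : Fin n → ℝ | A.mulVec x ≤ bL ∧ 0 ≤ x} = ∅ := by
      ext x; simp only [Set.mem_setOf_eq, Set.mem_empty_iff_false, iff_false, not_and]
      exact fun ha hb' => h1 x ha hb'
    have hD : {y : Fin m → ℝ | Aᵀ.mulVec y ≤ cL ∧ y ≤ 0} = ∅ := by
      ext y; simp only [Set.mem_setOf_eq, Set.mem_empty_iff_false, iff_false, not_and]
      exact fun ha hb' => h2 y ha hb'
    have := hdg bL cL le_rfl hb le_rfl hc
    rw [primalValC, dualValC, hP, hD, Set.image_empty, Set.image_empty,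
      sInf_empty, sSup_empty] at this
    exact absurd this (by simp)
  · intro hfeas b c hbL hbU hcL hcU
    have hPmono : (∃ x : Fin n → ℝ, A.mulVec x ≤ bL ∧ 0 ≤ x) →
        ∃ x : Fin n → ℝ, A.mulVec x ≤ b ∧ 0 ≤ x := by
      rintro ⟨x, hx1, hx2⟩; exact ⟨x, le_trans hx1 hbL, hx2⟩
    have hDmono : (∃ y : Fin m → ℝ, Aᵀ.mulVec y ≤ cL ∧ y ≤ 0) →
        ∃ y : Fin m → ℝ, Aᵀ.mulVec y ≤ c ∧ y ≤ 0 := by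
      rintro ⟨y, hy1, hy2⟩; exact ⟨y, le_trans hy1 hcL, hy2⟩
    by_cases hP : ∃ x : Fin n → ℝ, A.mulVec x ≤ b ∧ 0 ≤ x
    · by_cases hD : ∃ y : Fin m → ℝ, Aᵀ.mulVec y ≤ c ∧ y ≤ 0
      · -- both feasible: strong duality
        obtain ⟨x0, hx01, hx02⟩ := hP
        obtain ⟨y0, hy01, hy02⟩ := hD
        obtain ⟨x, y, ⟨hx1, hx2⟩, ⟨hy1, hy2⟩, hxy⟩ := strong_dualC A b c hx01 hx02 hy01 hy02
        apply le_antisymm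
        · calc primalValC A b c ≤ ((c ⬝ᵥ x : ℝ) : EReal) :=
                sInf_le (Set.mem_image_of_mem _ ⟨hx1, hx2⟩)
            _ ≤ ((b ⬝ᵥ y : ℝ) : EReal) := EReal.coe_le_coe_iff.mpr hxy
            _ ≤ dualValC A b c := le_sSup (Set.mem_image_of_mem _ ⟨hy1, hy2⟩)
        · apply sSup_le
          rintro _ ⟨y', hy', rfl⟩
          apply le_sInf
          rintro _ ⟨x', hx', rfl⟩
          exact EReal.coe_le_coe_iff.mpr (weak_dualC A hx'.1 hx'.2 hy'.1 hy'.2)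
      · -- primal feasible, dual infeasible: both values are ⊥
        obtain ⟨x0, hx01, hx02⟩ := hP
        obtain ⟨d, hd0, hdA, hdc⟩ := dual_infeas_cert A c hD
        have hDempty : {y : Fin m → ℝ | Aᵀ.mulVec y ≤ c ∧ y ≤ 0} = ∅ := by
          ext y; simp only [Set.mem_setOf_eq, Set.mem_empty_iff_false, iff_false]
          exact fun hy => hD ⟨y, hy⟩
        have hdual : dualValC A b c = ⊥ := by
          rw [dualValC, hDempty, Set.image_empty, sSup_empty]
        rw [hdual]
        rw [EReal.eq_bot_iff_forall_lt]
        intro r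
        set t : ℝ := max 0 ((r - c ⬝ᵥ x0 - 1) / (c ⬝ᵥ d)) with htdef
        have ht0 : 0 ≤ t := le_max_left _ _
        have htval : c ⬝ᵥ (x0 + t • d) < r := by
          have h5 : t * (c ⬝ᵥ d) ≤ ((r - c ⬝ᵥ x0 - 1) / (c ⬝ᵥ d)) * (c ⬝ᵥ d) :=
            mul_le_mul_of_nonpos_right (le_max_right _ _) hdc.le
          rw [div_mul_cancel₀ _ (ne_of_lt hdc)] at h5
          have e : c ⬝ᵥ (x0 + t • d) = c ⬝ᵥ x0 + t * (c ⬝ᵥ d) := by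
            rw [dotProduct_add, dotProduct_smul]; rfl
          rw [e]; linarith
        have hfeasx : A.mulVec (x0 + t • d) ≤ b ∧ 0 ≤ x0 + t • d := by
          constructor
          · intro i
            have e : (A *ᵥ (x0 + t • d)) i = (A *ᵥ x0) i + t * (A *ᵥ d) i := by
              rw [Matrix.mulVec_add, Matrix.mulVec_smul]; rfl
            rw [e]
            have := hdA i
            have h6 : t * (A *ᵥ d) i ≤ 0 := mul_nonpos_of_nonneg_of_nonpos ht0 (by simpa using this)
            have := hx01 i
            linarith
          · intro j
            have h7 : 0 ≤ t * d j := mul_nonneg ht0 (hd0 j)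
            have := hx02 j
            simp only [Pi.add_apply, Pi.smul_apply, smul_eq_mul]
            linarith
        calc primalValC A b c ≤ ((c ⬝ᵥ (x0 + t • d) : ℝ) : EReal) :=
              sInf_le (Set.mem_image_of_mem _ hfeasx)
          _ < ((r : ℝ) : EReal) := EReal.coe_lt_coe_iff.mpr htval
    · -- primal infeasible
      have hDfeas : ∃ y : Fin m → ℝ, Aᵀ.mulVec y ≤ c ∧ y ≤ 0 := by
        rcases hfeas with h | h
        · exact absurd (hPmono h) hP
        · exact hDmono h
      obtain ⟨y0, hy01, hy02⟩ := hDfeas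
      obtain ⟨w, hw0, hwA, hwb⟩ := primal_infeas_cert A b hP
      have hPempty : {x : Fin n → ℝ | A.mulVec x ≤ b ∧ 0 ≤ x} = ∅ := by
        ext x; simp only [Set.mem_setOf_eq, Set.mem_empty_iff_false, iff_false]
        exact fun hx => hP ⟨x, hx⟩
      have hprimal : primalValC A b c = ⊤ := by
        rw [primalValC, hPempty, Set.image_empty, sInf_empty]
      rw [hprimal]
      symm
      rw [EReal.eq_top_iff_forall_lt]
      intro r
      set t : ℝ := max 0 ((b ⬝ᵥ y0 - r - 1) / (b ⬝ᵥ w)) with htdef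
      have ht0 : 0 ≤ t := le_max_left _ _
      have htval : r < b ⬝ᵥ (y0 - t • w) := by
        have h5 : t * (b ⬝ᵥ w) ≤ ((b ⬝ᵥ y0 - r - 1) / (b ⬝ᵥ w)) * (b ⬝ᵥ w) :=
          mul_le_mul_of_nonpos_right (le_max_right _ _) hwb.le
        rw [div_mul_cancel₀ _ (ne_of_lt hwb)] at h5
        have e : b ⬝ᵥ (y0 - t • w) = b ⬝ᵥ y0 - t * (b ⬝ᵥ w) := by
          rw [dotProduct_sub, dotProduct_smul]; rfl
        rw [e]; linarith
      have hfeasy : Aᵀ.mulVec (y0 - t • w) ≤ c ∧ y0 - t • w ≤ 0 := by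
        constructor
        · intro j
          have e : (Aᵀ *ᵥ (y0 - t • w)) j = (Aᵀ *ᵥ y0) j - t * (Aᵀ *ᵥ w) j := by
            rw [Matrix.mulVec_sub, Matrix.mulVec_smul]; rfl
          rw [e]
          have h6 : 0 ≤ t * (Aᵀ *ᵥ w) j := mul_nonneg ht0 (by simpa using hwA j)
          have := hy01 j
          linarith
        · intro i
          have h7 : 0 ≤ t * w i := mul_nonneg ht0 (hw0 i)
          have := hy02 i
          simp only [Pi.sub_apply, Pi.smul_apply, smul_eq_mul]
          linarith
      calc ((r : ℝ) : EReal) < ((b ⬝ᵥ (y0 - t • w) : ℝ) : EReal) :=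
            EReal.coe_lt_coe_iff.mpr htval
        _ ≤ dualValC A b c := le_sSup (Set.mem_image_of_mem _ hfeasy)
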